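/- For every natural number n ≥ 1, C(n,n) = (−1)^{n+1} · S(n,n). -/

import Mathlib

/-- Alternating sum of binomials times powers vanishes when exponent < top. -/
lemma alt_pow_sum_zero : ∀ k m : ℕ, k < m →
    ∑ t ∈ Finset.range (m + 1), (-1 : ℚ) ^ t * (m.choose t : ℚ) * (t : ℚ) ^ k = 0 := by
  intro k
  induction k using Nat.strong_induction_on with
  | _ k ih =>
    intro m hm
    match k with
    | 0 =>
      have h := add_pow (-1 : ℚ) 1 m
      simp only [one_pow, mul_one, neg_add_cancel] at h
      rw [zero_pow (by omega)] at h
      simp only [pow_zero, mul_one]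
      exact h.symm
    | k + 1 =>
      obtain ⟨m', rfl⟩ : ∃ m', m = m' + 1 := ⟨m - 1, by omega⟩
      rw [Finset.sum_range_succ']
      simp only [Nat.cast_zero, zero_pow (Nat.succ_ne_zero k), mul_zero, add_zero]
      have hterm : ∀ i ∈ Finset.range (m' + 1),
          (-1 : ℚ) ^ (i + 1) * ((m' + 1).choose (i + 1) : ℚ) * ((i : ℚ) + 1) ^ (k + 1)
          = ∑ r ∈ Finset.range (k + 1),
              (-((m' : ℚ) + 1) * (k.choose r : ℚ)) * ((-1 : ℚ) ^ i * (m'.choose i : ℚ) * (i : ℚ) ^ r) := by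
        intro i _
        have hch : ((m' + 1).choose (i + 1) : ℚ) * ((i : ℚ) + 1) = ((m' : ℚ) + 1) * (m'.choose i : ℚ) := by
          exact_mod_cast congrArg (Nat.cast : ℕ → ℚ) (Nat.add_one_mul_choose_eq m' i).symm
        have hb : ((i : ℚ) + 1) ^ k = ∑ r ∈ Finset.range (k + 1), (i : ℚ) ^ r * (k.choose r : ℚ) := by
          have := add_pow (i : ℚ) 1 k
          simpa using this
        calc (-1 : ℚ) ^ (i + 1) * ((m' + 1).choose (i + 1) : ℚ) * ((i : ℚ) + 1) ^ (k + 1)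
            = (-1 : ℚ) ^ (i + 1) * (((m' + 1).choose (i + 1) : ℚ) * ((i : ℚ) + 1)) * ((i : ℚ) + 1) ^ k := by
              rw [pow_succ]; ring
          _ = (-1 : ℚ) ^ (i + 1) * (((m' : ℚ) + 1) * (m'.choose i : ℚ)) * ((i : ℚ) + 1) ^ k := by rw [hch]
          _ = ∑ r ∈ Finset.range (k + 1),
              (-((m' : ℚ) + 1) * (k.choose r : ℚ)) * ((-1 : ℚ) ^ i * (m'.choose i : ℚ) * (i : ℚ) ^ r) := by
              rw [hb, Finset.mul_sum]
              refine Finset.sum_congr rfl fun r _ => by rw [pow_succ]; ring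
      rw [Finset.sum_congr rfl (fun i hi => by push_cast; exact hterm i hi)]
      rw [Finset.sum_comm]
      refine Finset.sum_eq_zero fun r hr => ?_
      have hrk := Finset.mem_range.mp hr
      rw [← Finset.mul_sum, ih r hrk m' (by omega), mul_zero]

/-- Key binomial identity. -/
lemma key_nat (s : ℕ) : ∀ n, s ≤ n →
    ∑ k ∈ Finset.range (n + 1), (Nat.choose k s) * 2 ^ (n - k)
      = ∑ j ∈ Finset.range (n - s + 1), Nat.choose (n + 1) j := by
  intro n hn
  induction n, hn using Nat.le_induction with
  | base =>
    rw [Finset.sum_range_succ, Finset.sum_eq_zero (fun k hk => by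
      rw [Nat.choose_eq_zero_of_lt (Finset.mem_range.mp hk)]; ring)]
    simp
  | succ n hsn ih =>
    have hL : ∑ k ∈ Finset.range (n + 2), (Nat.choose k s) * 2 ^ (n + 1 - k)
        = 2 * (∑ k ∈ Finset.range (n + 1), (Nat.choose k s) * 2 ^ (n - k)) + Nat.choose (n + 1) s := by
      rw [Finset.sum_range_succ, Nat.sub_self, pow_zero, mul_one, Finset.mul_sum]
      congr 1
      refine Finset.sum_congr rfl fun k hk => ?_
      have hkn := Finset.mem_range.mp hk
      have : n + 1 - k = (n - k) + 1 := by omega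
      rw [this, pow_succ]; ring
    have hR : ∑ j ∈ Finset.range (n + 1 - s + 1), Nat.choose (n + 2) j
        = 2 * (∑ j ∈ Finset.range (n - s + 1), Nat.choose (n + 1) j) + Nat.choose (n + 1) s := by
      have hm : n + 1 - s + 1 = (n - s) + 2 := by omega
      rw [hm, Finset.sum_range_succ']
      have hsplit : ∀ i ∈ Finset.range (n - s + 1),
          Nat.choose (n + 2) (i + 1) = Nat.choose (n + 1) i + Nat.choose (n + 1) (i + 1) :=
        fun i _ => Nat.choose_succ_succ (n + 1) i
      rw [Finset.sum_congr rfl hsplit, Finset.sum_add_distrib]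
      have h2 : ∑ j ∈ Finset.range (n - s + 2), Nat.choose (n + 1) j
          = ∑ i ∈ Finset.range (n - s + 1), Nat.choose (n + 1) (i + 1) + Nat.choose (n + 1) 0 :=
        Finset.sum_range_succ' _ _
      have hz1 : Nat.choose (n + 1) 0 = 1 := Nat.choose_zero_right _
      have hz2 : Nat.choose (n + 2) 0 = 1 := Nat.choose_zero_right _
      have h3 : ∑ j ∈ Finset.range (n - s + 2), Nat.choose (n + 1) j
          = ∑ j ∈ Finset.range (n - s + 1), Nat.choose (n + 1) j + Nat.choose (n + 1) (n - s + 1) := by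
        rw [Finset.sum_range_succ]
      have h4 : Nat.choose (n + 1) (n - s + 1) = Nat.choose (n + 1) s := by
        have : n - s + 1 = (n + 1) - s := by omega
        rw [this, Nat.choose_symm (by omega)]
      omega
    rw [hL, hR, ih]

/-- Hockey stick over `range`. -/
lemma hockey (s n : ℕ) : ∑ k ∈ Finset.range (n + 1), Nat.choose k s = Nat.choose (n + 1) (s + 1) := by
  rw [← Nat.sum_Icc_choose]
  refine (Finset.sum_subset ?_ ?_).symm
  · intro k hk
    simp only [Finset.mem_Icc] at hk
    exact Finset.mem_range.mpr (by omega)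
  · intro k hk hk'
    simp only [Finset.mem_range] at hk
    simp only [Finset.mem_Icc] at hk'
    exact Nat.choose_eq_zero_of_lt (by omega)



/-- `S(l,n) = (-1)^n * ∑_{i=0}^{n} ∑_{p=0}^{i} (-1)^p * binom(n+1, i-p) * p^l`,
with the convention `0^0 = 1`. -/
def S (l n : ℕ) : ℚ :=
  (-1) ^ n * ∑ i ∈ Finset.range (n + 1), ∑ p ∈ Finset.range (i + 1),
    (-1) ^ p * (Nat.choose (n + 1) (i - p) : ℚ) * (p : ℚ) ^ l

/-- `C(l,n) = (-1)^(n-l) * ∑_{k=1}^{n} ((2^n - 2^(n-k))/(k+1))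
  * ∑_{t=0}^{k+1} (-1)^t * binom(k+1, t) * t^(l+1)`. -/
def C (l n : ℕ) : ℚ :=
  (-1) ^ (n - l) * ∑ k ∈ Finset.Icc 1 n,
    (((2 : ℚ) ^ n - (2 : ℚ) ^ (n - k)) / (k + 1)) *
      ∑ t ∈ Finset.range (k + 2), (-1) ^ t * (Nat.choose (k + 1) t : ℚ) * (t : ℚ) ^ (l + 1)

/-- Partial sum of binomial coefficients, as a rational. -/
def Aq (n p : ℕ) : ℚ := ∑ j ∈ Finset.range (n + 1 - p), ((n + 1).choose j : ℚ)

/-- For every natural number `n ≥ 1`, `C(n,n) = (-1)^(n+1) * S(n,n)`. -/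
theorem stmt_7 (n : ℕ) (hn : 1 ≤ n) : C n n = (-1 : ℚ) ^ (n + 1) * S n n := by
  have hn0 : n ≠ 0 := by omega
  -- Step A : rewrite S
  have hS : S n n = (-1 : ℚ) ^ n *
      ∑ p ∈ Finset.range (n + 1), (-1 : ℚ) ^ p * (p : ℚ) ^ n * Aq n p := by
    unfold S
    congr 1
    rw [Finset.sum_comm' (t' := Finset.range (n + 1)) (s' := fun p => Finset.Ico p (n + 1))
      (fun i p => by simp only [Finset.mem_range, Finset.mem_Ico]; omega)]
    refine Finset.sum_congr rfl fun p hp => ?_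
    rw [Finset.sum_Ico_eq_sum_range]
    simp only [Nat.add_sub_cancel_left]
    unfold Aq
    rw [Finset.mul_sum]
    exact Finset.sum_congr rfl fun j _ => by ring
  -- Step B : rewrite C
  have hC : C n n = ∑ s ∈ Finset.range (n + 1), (-1 : ℚ) ^ (s + 1) * ((s : ℚ) + 1) ^ n *
      ∑ k ∈ Finset.Icc 1 n, ((2 : ℚ) ^ n - (2 : ℚ) ^ (n - k)) * (k.choose s : ℚ) := by
    unfold C
    rw [Nat.sub_self, pow_zero, one_mul]
    have hext : ∀ k ∈ Finset.Icc 1 n,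
        (((2 : ℚ) ^ n - (2 : ℚ) ^ (n - k)) / (k + 1)) *
          ∑ t ∈ Finset.range (k + 2), (-1 : ℚ) ^ t * ((k + 1).choose t : ℚ) * (t : ℚ) ^ (n + 1)
        = ∑ t ∈ Finset.range (n + 2), (((2 : ℚ) ^ n - (2 : ℚ) ^ (n - k)) / (k + 1)) *
            ((-1 : ℚ) ^ t * ((k + 1).choose t : ℚ) * (t : ℚ) ^ (n + 1)) := by
      intro k hk
      obtain ⟨hk1, hk2⟩ := Finset.mem_Icc.mp hk
      rw [Finset.mul_sum]
      refine Finset.sum_subset (Finset.range_subset_range.mpr (by omega)) fun t ht ht' => ?_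
      have h1 : k + 1 < t := by
        simp only [Finset.mem_range] at ht ht'; omega
      rw [Nat.choose_eq_zero_of_lt h1]; simp
    rw [Finset.sum_congr rfl hext, Finset.sum_comm, Finset.sum_range_succ']
    have hzero : ∑ k ∈ Finset.Icc 1 n, (((2 : ℚ) ^ n - (2 : ℚ) ^ (n - k)) / (k + 1)) *
        ((-1 : ℚ) ^ 0 * ((k + 1).choose 0 : ℚ) * ((0 : ℕ) : ℚ) ^ (n + 1)) = 0 := by
      refine Finset.sum_eq_zero fun k _ => ?_
      simp
    rw [hzero, add_zero]
    refine Finset.sum_congr rfl fun s hs => ?_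
    rw [Finset.mul_sum]
    refine Finset.sum_congr rfl fun k hk => ?_
    obtain ⟨hk1, hk2⟩ := Finset.mem_Icc.mp hk
    have hk0 : ((k : ℚ) + 1) ≠ 0 := by positivity
    have hch : (((k + 1).choose (s + 1) : ℚ)) * ((s : ℚ) + 1)
        = ((k : ℚ) + 1) * (k.choose s : ℚ) := by
      exact_mod_cast congrArg (Nat.cast (R := ℚ)) (Nat.add_one_mul_choose_eq k s).symm
    push_cast
    calc ((2 : ℚ) ^ n - 2 ^ (n - k)) / ((k : ℚ) + 1) *
          ((-1 : ℚ) ^ (s + 1) * ((k + 1).choose (s + 1) : ℚ) * ((s : ℚ) + 1) ^ (n + 1))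
        = (((k + 1).choose (s + 1) : ℚ) * ((s : ℚ) + 1)) *
            (((2 : ℚ) ^ n - 2 ^ (n - k)) * (-1 : ℚ) ^ (s + 1) * ((s : ℚ) + 1) ^ n) / ((k : ℚ) + 1) := by
          rw [pow_succ]; ring
      _ = (((k : ℚ) + 1) * (k.choose s : ℚ)) *
            (((2 : ℚ) ^ n - 2 ^ (n - k)) * (-1 : ℚ) ^ (s + 1) * ((s : ℚ) + 1) ^ n) / ((k : ℚ) + 1) := by
          rw [hch]
      _ = (-1 : ℚ) ^ (s + 1) * ((s : ℚ) + 1) ^ n *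
            (((2 : ℚ) ^ n - (2 : ℚ) ^ (n - k)) * (k.choose s : ℚ)) := by
          field_simp
  -- Step C : the inner sum over k
  have hB : ∀ s ∈ Finset.range (n + 1),
      ∑ k ∈ Finset.Icc 1 n, ((2 : ℚ) ^ n - (2 : ℚ) ^ (n - k)) * (k.choose s : ℚ)
        = ((2 : ℚ) ^ n - 1) * (((n + 1).choose (s + 1) : ℕ) : ℚ) - Aq n (s + 1) := by
    intro s hs
    have hsn : s ≤ n := by have := Finset.mem_range.mp hs; omega
    have h0 : ∑ k ∈ Finset.Icc 1 n, ((2 : ℚ) ^ n - (2 : ℚ) ^ (n - k)) * (k.choose s : ℚ)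
        = ∑ k ∈ Finset.range (n + 1), ((2 : ℚ) ^ n - (2 : ℚ) ^ (n - k)) * (k.choose s : ℚ) := by
      refine Finset.sum_subset ?_ ?_
      · intro k hk
        rw [Finset.mem_Icc] at hk
        exact Finset.mem_range.mpr (by omega)
      · intro k hk hk'
        have hk0 : k = 0 := by
          rw [Finset.mem_range] at hk; rw [Finset.mem_Icc] at hk'; omega
        subst hk0; simp
    have h1 : ∑ k ∈ Finset.range (n + 1), ((2 : ℚ) ^ n - (2 : ℚ) ^ (n - k)) * (k.choose s : ℚ)
        = (2 : ℚ) ^ n * (∑ k ∈ Finset.range (n + 1), (k.choose s : ℚ))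
          - ∑ k ∈ Finset.range (n + 1), (k.choose s : ℚ) * (2 : ℚ) ^ (n - k) := by
      rw [Finset.mul_sum, ← Finset.sum_sub_distrib]
      exact Finset.sum_congr rfl fun k _ => by ring
    have h2 : ∑ k ∈ Finset.range (n + 1), (k.choose s : ℚ) = (((n + 1).choose (s + 1) : ℕ) : ℚ) := by
      exact_mod_cast congrArg (Nat.cast (R := ℚ)) (hockey s n)
    have h3 := congrArg (Nat.cast (R := ℚ)) (key_nat s n hsn)
    push_cast at h3
    rw [h0, h1, h2, h3]
    have h4 : Aq n (s + 1) = ∑ j ∈ Finset.range (n - s), (((n + 1).choose j : ℕ) : ℚ) := by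
      unfold Aq
      rw [Nat.succ_sub_succ]
    have h5 : ∑ j ∈ Finset.range (n - s + 1), (((n + 1).choose j : ℕ) : ℚ)
        = ∑ j ∈ Finset.range (n - s), (((n + 1).choose j : ℕ) : ℚ)
            + (((n + 1).choose (s + 1) : ℕ) : ℚ) := by
      rw [Finset.sum_range_succ]
      congr 2
      have hd : n - s = (n + 1) - (s + 1) := by omega
      rw [hd, Nat.choose_symm (by omega)]
    rw [h4, h5]
    ring
  -- alternating sum vanishes
  have halt : ∑ s ∈ Finset.range (n + 1),
      (-1 : ℚ) ^ (s + 1) * ((s : ℚ) + 1) ^ n * (((n + 1).choose (s + 1) : ℕ) : ℚ) = 0 := by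
    have h := alt_pow_sum_zero n (n + 1) (by omega)
    rw [Finset.sum_range_succ'] at h
    simp only [Nat.cast_zero, zero_pow hn0, mul_zero, add_zero] at h
    push_cast at h
    rw [← h]
    exact Finset.sum_congr rfl fun s _ => by ring
  -- assemble
  rw [hC, Finset.sum_congr rfl (fun s hs => by rw [hB s hs])]
  have hsplit : ∑ s ∈ Finset.range (n + 1), (-1 : ℚ) ^ (s + 1) * ((s : ℚ) + 1) ^ n *
        (((2 : ℚ) ^ n - 1) * (((n + 1).choose (s + 1) : ℕ) : ℚ) - Aq n (s + 1))
      = ((2 : ℚ) ^ n - 1) * (∑ s ∈ Finset.range (n + 1),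
          (-1 : ℚ) ^ (s + 1) * ((s : ℚ) + 1) ^ n * (((n + 1).choose (s + 1) : ℕ) : ℚ))
        - ∑ s ∈ Finset.range (n + 1), (-1 : ℚ) ^ (s + 1) * ((s : ℚ) + 1) ^ n * Aq n (s + 1) := by
    rw [Finset.mul_sum, ← Finset.sum_sub_distrib]
    exact Finset.sum_congr rfl fun s _ => by ring
  rw [hsplit, halt, mul_zero, zero_sub]
  -- right hand side
  rw [hS]
  have hsign : (-1 : ℚ) ^ (n + 1) * (-1 : ℚ) ^ n = -1 := by
    rw [← pow_add, show n + 1 + n = 2 * n + 1 by ring, pow_succ, pow_mul]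
    norm_num
  rw [← mul_assoc, hsign, neg_one_mul, neg_inj]
  have hA0 : Aq n (n + 1) = 0 := by unfold Aq; simp
  rw [Finset.sum_range_succ, hA0, mul_zero, add_zero]
  conv_rhs => rw [Finset.sum_range_succ']
  simp only [Nat.cast_zero, zero_pow hn0, mul_zero, zero_mul, add_zero]
  exact Finset.sum_congr rfl fun s _ => by push_cast; ring
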